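/- The map θ ↦ F(U, θ) of the simplified firespread-rate model is nonincreasing on the interval [0, π]: for all 0 ≤ θ₁ ≤ θ₂ ≤ π, F(U, θ₂) ≤ F(U, θ₁). Hence the spread rate is maximal at the head (θ = 0) and minimal at the rear (θ = π). -/
import Mathlib


open Real

/-- The simplified firespread rate is nonincreasing on `[0, π]`; hence the
spread rate is maximal at the head (`θ = 0`) and minimal at the rear (`θ = π`). -/
theorem simplified_fire_model_antitone
    (ε₀ c₁ n α U : ℝ)
    (hε₀ : 0 ≤ ε₀) (hc₁ : 0 ≤ c₁) (hn : 0 < n) (hα : α ∈ Set.Icc (0 : ℝ) 1)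
    (hU : 0 ≤ U)
    (F : ℝ → ℝ)
    (hF : ∀ θ : ℝ, F θ =
      if |θ| ≤ π / 2 then ε₀ + c₁ * Real.sqrt U * Real.cos θ ^ n
      else ε₀ * (α + (1 - α) * |Real.sin θ|)) :
    AntitoneOn F (Set.Icc 0 π) ∧
    (∀ θ ∈ Set.Icc (0 : ℝ) π, F θ ≤ F 0 ∧ F π ≤ F θ) := by
  obtain ⟨hα0, hα1⟩ := hα
  have key : AntitoneOn F (Set.Icc 0 π) := by
    rintro θ₁ ⟨h10, h1π⟩ θ₂ ⟨h20, h2π⟩ h12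
    rw [hF θ₁, hF θ₂, abs_of_nonneg h10, abs_of_nonneg h20]
    have hsin1 : 0 ≤ Real.sin θ₁ := Real.sin_nonneg_of_nonneg_of_le_pi h10 h1π
    have hsin2 : 0 ≤ Real.sin θ₂ := Real.sin_nonneg_of_nonneg_of_le_pi h20 h2π
    by_cases h2 : θ₂ ≤ π / 2
    · have h1 : θ₁ ≤ π / 2 := h12.trans h2
      rw [if_pos h1, if_pos h2]
      have hc2 : 0 ≤ Real.cos θ₂ := Real.cos_nonneg_of_mem_Icc ⟨by linarith, h2⟩
      have hcle : Real.cos θ₂ ≤ Real.cos θ₁ :=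
        Real.cos_le_cos_of_nonneg_of_le_pi h10 h2π h12
      have := Real.rpow_le_rpow hc2 hcle hn.le
      have := mul_le_mul_of_nonneg_left this (mul_nonneg hc₁ (Real.sqrt_nonneg U))
      linarith
    · push_neg at h2
      rw [if_neg (not_le.mpr h2), abs_of_nonneg hsin2]
      have hle1 : α + (1 - α) * Real.sin θ₂ ≤ 1 := by
        nlinarith [Real.sin_le_one θ₂]
      by_cases h1 : θ₁ ≤ π / 2
      · rw [if_pos h1]
        have hc1 : 0 ≤ Real.cos θ₁ := Real.cos_nonneg_of_mem_Icc ⟨by linarith, h1⟩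
        have hcn : 0 ≤ Real.cos θ₁ ^ n := Real.rpow_nonneg hc1 n
        have : ε₀ * (α + (1 - α) * Real.sin θ₂) ≤ ε₀ := by
          nlinarith
        nlinarith [mul_nonneg (mul_nonneg hc₁ (Real.sqrt_nonneg U)) hcn]
      · push_neg at h1
        rw [if_neg (not_le.mpr h1), abs_of_nonneg hsin1]
        have hsle : Real.sin θ₂ ≤ Real.sin θ₁ := by
          have := Real.cos_le_cos_of_nonneg_of_le_pi (by linarith : (0:ℝ) ≤ θ₁ - π/2)
            (by linarith : θ₂ - π/2 ≤ π) (by linarith)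
          rwa [Real.cos_sub_pi_div_two, Real.cos_sub_pi_div_two] at this
        have h : α + (1 - α) * Real.sin θ₂ ≤ α + (1 - α) * Real.sin θ₁ := by nlinarith
        exact mul_le_mul_of_nonneg_left h hε₀
  refine ⟨key, fun θ hθ => ?_⟩
  exact ⟨key (Set.left_mem_Icc.mpr Real.pi_pos.le) hθ hθ.1,
    key hθ (Set.right_mem_Icc.mpr Real.pi_pos.le) hθ.2⟩
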